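/- Let M be a symmetric negative definite real n×n matrix whose off-diagonal entries are nonnegative (M_{ij} ≥ 0 for all i ≠ j). If x ∈ ℝ^n satisfies (Mx)_i ≤ 0 for every i, then x_i ≥ 0 for every i. -/
import Mathlib


open Matrix

/-- **Effectivity step.**
If `M` is a symmetric negative definite real `n × n` matrix with nonnegative
off-diagonal entries and `x` satisfies `(M x)ᵢ ≤ 0` for every `i`, then all
entries of `x` are nonnegative. -/
theorem negdef_nonneg_offdiag_nonpos_image_nonneg
    (n : ℕ) (M : Matrix (Fin n) (Fin n) ℝ) (hsym : M.IsSymm)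
    (hneg : ∀ y : Fin n → ℝ, y ≠ 0 → y ⬝ᵥ M.mulVec y < 0)
    (hoff : ∀ i j : Fin n, i ≠ j → 0 ≤ M i j)
    (x : Fin n → ℝ) (hx : ∀ i, M.mulVec x i ≤ 0) :
    ∀ i, 0 ≤ x i := by
  set y : Fin n → ℝ := fun i => max (-x i) 0 with hy
  set xp : Fin n → ℝ := fun i => max (x i) 0 with hxp
  have hy0 : ∀ i, 0 ≤ y i := fun i => le_max_right _ _
  have hxp0 : ∀ i, 0 ≤ xp i := fun i => le_max_right _ _
  have hyeq : y = 0 := by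
    by_contra h
    have hlt := hneg y h
    have h1 : y ⬝ᵥ M.mulVec x ≤ 0 := by
      apply Finset.sum_nonpos
      intro i _
      exact mul_nonpos_of_nonneg_of_nonpos (hy0 i) (hx i)
    have h2 : 0 ≤ y ⬝ᵥ M.mulVec xp := by
      simp only [Matrix.mulVec, dotProduct]
      apply Finset.sum_nonneg
      intro i _
      rw [Finset.mul_sum]
      apply Finset.sum_nonneg
      intro j _
      rcases eq_or_ne i j with rfl | hij
      · rcases le_or_gt (x i) 0 with hxi | hxi
        · have : xp i = 0 := max_eq_right hxi
          simp [this]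
        · have : y i = 0 := by
            simp [hy, max_eq_right (by linarith : -x i ≤ 0)]
          simp [this]
      · exact mul_nonneg (hy0 i) (mul_nonneg (hoff i j hij) (hxp0 j))
    have hsub : xp - x = y := by
      funext i
      simp only [Pi.sub_apply, hy, hxp]
      rcases le_total (x i) 0 with h | h
      · rw [max_eq_right h, max_eq_left (by linarith)]; ring
      · rw [max_eq_left h, max_eq_right (by linarith)]; ring
    have key : y ⬝ᵥ M.mulVec y = y ⬝ᵥ M.mulVec xp - y ⬝ᵥ M.mulVec x := by
      rw [← hsub, Matrix.mulVec_sub, dotProduct_sub]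
    linarith [key ▸ hlt]
  intro i
  have : y i = 0 := by rw [hyeq]; rfl
  have : max (-x i) 0 = 0 := this
  nlinarith [le_max_left (-x i) 0, this]
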